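/- arXiv:2602.19633 — 3 statements merged into one kernel-verified Lean document; each statement's English description precedes it below -/
import Mathlib

section
/- Let ε_p, ε_s, δ_b, δ_r, α, p be real numbers in [0,1] satisfying the strict inequality (1-ε_p)·δ_b > ε_p·δ_r, and assume ε_s > 0, α·p > 0, and T ≥ 1 is a natural number. Set ε' := (1-α·p)·ε_s. Then ((1-ε_p)(1-ε'·δ_b) + ε_p·ε'·δ_r)^T > ((1-ε_p)(1-ε_s·δ_b) + ε_p·ε_s·δ_r)^T, provided the quantity (1-ε_p)(1-ε_s·δ_b) + ε_p·ε_s·δ_r is nonnegative. -/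
/-- Strict improvement of Plan-and-Act over ReAct: under the strict condition
`(1-ε_p)·δ_b > ε_p·δ_r`, with `ε_s > 0` and `α·p > 0`, the Plan-and-Act bound
with effective sampling error `ε' = (1-α·p)·ε_s` is strictly larger than the
ReAct bound, provided the ReAct per-step quantity is nonnegative. -/
theorem pa_gt_react (εp εs δb δr α p : ℝ)
    (hεp : εp ∈ Set.Icc (0 : ℝ) 1) (hεs : εs ∈ Set.Icc (0 : ℝ) 1)
    (hδb : δb ∈ Set.Icc (0 : ℝ) 1) (hδr : δr ∈ Set.Icc (0 : ℝ) 1)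
    (hα : α ∈ Set.Icc (0 : ℝ) 1) (hp : p ∈ Set.Icc (0 : ℝ) 1)
    (hcond : (1 - εp) * δb > εp * δr)
    (hεs0 : εs > 0) (hαp : α * p > 0)
    (T : ℕ) (hT : 1 ≤ T)
    (hnonneg : 0 ≤ (1 - εp) * (1 - εs * δb) + εp * (εs * δr)) :
    ((1 - εp) * (1 - ((1 - α * p) * εs) * δb) + εp * (((1 - α * p) * εs) * δr)) ^ T >
      ((1 - εp) * (1 - εs * δb) + εp * (εs * δr)) ^ T := by
  have hαp1 : α * p ≤ 1 := mul_le_one₀ hα.2 hp.1 hp.2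
  have hlt : (1 - εp) * (1 - εs * δb) + εp * (εs * δr) <
      (1 - εp) * (1 - ((1 - α * p) * εs) * δb) + εp * (((1 - α * p) * εs) * δr) := by
    nlinarith [mul_pos hαp hεs0]
  exact pow_lt_pow_left₀ hlt hnonneg (by omega)
end

section
/- Let ε_p, ε_s, δ_b, δ_r, α, p be real numbers in [0,1] satisfying (1-ε_p)·δ_b ≥ ε_p·δ_r, let T ≥ 1 be a natural number, let d : {0,1,…,T-1} → ℕ satisfy d(t) ≥ 1 for all t, and set ε' := (1-α·p)·ε_s. Then U_ours ≥ U_PA ≥ U_ReAct, where U_ours := ∏_{t=0}^{T-1} (1 - ε_p^{d(t)}), U_PA := ((1-ε_p)(1-ε'·δ_b) + ε_p·ε'·δ_r)^T, and U_ReAct := ((1-ε_p)(1-ε_s·δ_b) + ε_p·ε_s·δ_r)^T. -/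
/-- TAPE dominates Plan-and-Act which dominates ReAct:
`U_ours ≥ U_PA ≥ U_ReAct`, where `U_ours = ∏_{t<T} (1 - ε_p^{d(t)})`,
`U_PA = ((1-ε_p)(1-ε'·δ_b) + ε_p·ε'·δ_r)^T` with `ε' = (1-α·p)·ε_s`, and
`U_ReAct = ((1-ε_p)(1-ε_s·δ_b) + ε_p·ε_s·δ_r)^T`. -/
theorem ours_ge_pa_ge_react (εp εs δb δr α p : ℝ)
    (hεp : εp ∈ Set.Icc (0 : ℝ) 1) (hεs : εs ∈ Set.Icc (0 : ℝ) 1)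
    (hδb : δb ∈ Set.Icc (0 : ℝ) 1) (hδr : δr ∈ Set.Icc (0 : ℝ) 1)
    (hα : α ∈ Set.Icc (0 : ℝ) 1) (hp : p ∈ Set.Icc (0 : ℝ) 1)
    (hcond : (1 - εp) * δb ≥ εp * δr)
    (T : ℕ) (hT : 1 ≤ T)
    (d : ℕ → ℕ) (hd : ∀ t < T, 1 ≤ d t) :
    (∏ t ∈ Finset.range T, (1 - εp ^ d t)) ≥
        ((1 - εp) * (1 - ((1 - α * p) * εs) * δb) +
          εp * (((1 - α * p) * εs) * δr)) ^ T ∧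
      ((1 - εp) * (1 - ((1 - α * p) * εs) * δb) +
          εp * (((1 - α * p) * εs) * δr)) ^ T ≥
        ((1 - εp) * (1 - εs * δb) + εp * (εs * δr)) ^ T := by
  obtain ⟨hεp0, hεp1⟩ := hεp
  obtain ⟨hεs0, hεs1⟩ := hεs
  obtain ⟨hδb0, hδb1⟩ := hδb
  obtain ⟨hδr0, hδr1⟩ := hδr
  obtain ⟨hα0, hα1⟩ := hα
  obtain ⟨hp0, hp1⟩ := hp
  set ε' : ℝ := (1 - α * p) * εs with hε'
  have hαp1 : α * p ≤ 1 := by nlinarith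
  have hαp0 : 0 ≤ α * p := mul_nonneg hα0 hp0
  have hε'0 : 0 ≤ ε' := mul_nonneg (by linarith) hεs0
  have hε's : ε' ≤ εs := by nlinarith
  -- f(ε) = (1-εp)(1-ε δb) + εp (ε δr) ; monotone decreasing in ε
  have key : ∀ x y : ℝ, 0 ≤ x → x ≤ y →
      (1 - εp) * (1 - y * δb) + εp * (y * δr) ≤
      (1 - εp) * (1 - x * δb) + εp * (x * δr) := by
    intro x y hx hxy
    nlinarith [mul_nonneg (sub_nonneg.2 hxy) (sub_nonneg.2 (hcond))]
  have hfnonneg : ∀ x : ℝ, 0 ≤ x → x ≤ 1 →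
      0 ≤ (1 - εp) * (1 - x * δb) + εp * (x * δr) := by
    intro x hx hx1
    have : x * δb ≤ 1 := by nlinarith
    have h1 : 0 ≤ (1 - εp) * (1 - x * δb) := mul_nonneg (by linarith) (by linarith)
    have h2 : 0 ≤ εp * (x * δr) := mul_nonneg hεp0 (mul_nonneg hx hδr0)
    linarith
  constructor
  · -- U_ours ≥ U_PA
    have h1 : ((1 - εp) * (1 - ε' * δb) + εp * (ε' * δr)) ^ T ≤ (1 - εp) ^ T := by
      apply pow_le_pow_left₀ (hfnonneg ε' hε'0 (le_trans hε's hεs1))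
      have := key 0 ε' le_rfl hε'0
      simpa using this
    have h2 : (1 - εp) ^ T ≤ ∏ t ∈ Finset.range T, (1 - εp ^ d t) := by
      rw [show (1 - εp) ^ T = ∏ _t ∈ Finset.range T, (1 - εp) by simp]
      apply Finset.prod_le_prod
      · intro i _; linarith
      · intro i hi
        have := pow_le_pow_of_le_one hεp0 hεp1 (hd i (Finset.mem_range.mp hi))
        simpa using by linarith [this, pow_one εp]
    exact le_trans h1 h2
  · exact pow_le_pow_left₀ (hfnonneg εs hεs0 hεs1) (key ε' εs hε'0 hε's) T
end

section
/- Let ε_p, ε, δ_b, δ_r be real numbers with 0 < ε_p < 1 and ε, δ_b, δ_r ∈ [0,1], satisfying (1-ε_p)·δ_b ≥ ε_p·δ_r, and let d ≥ 1 be a natural number. Then 1 - ε_p^d = (1-ε_p)(1-ε·δ_b) + ε_p·ε·δ_r holds if and only if d = 1 and ε·((1-ε_p)·δ_b - ε_p·δ_r) = 0. -/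
/-- Equality characterization between the TAPE per-step viable-action
probability `1 - ε_p^d` and the per-step probability
`(1-ε_p)(1-ε·δ_b) + ε_p·ε·δ_r`: they coincide iff `d = 1` and
`ε·((1-ε_p)·δ_b - ε_p·δ_r) = 0`. -/
theorem tape_per_step_eq_iff (εp ε δb δr : ℝ)
    (hεp0 : 0 < εp) (hεp1 : εp < 1)
    (hε : ε ∈ Set.Icc (0 : ℝ) 1) (hδb : δb ∈ Set.Icc (0 : ℝ) 1)
    (hδr : δr ∈ Set.Icc (0 : ℝ) 1)
    (hcond : (1 - εp) * δb ≥ εp * δr)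
    (d : ℕ) (hd : 1 ≤ d) :
    1 - εp ^ d = (1 - εp) * (1 - ε * δb) + εp * (ε * δr) ↔
      d = 1 ∧ ε * ((1 - εp) * δb - εp * δr) = 0 := by
  have hE : 0 ≤ ε * ((1 - εp) * δb - εp * δr) :=
    mul_nonneg hε.1 (by linarith)
  constructor
  · intro h
    have heq : εp - εp ^ d + ε * ((1 - εp) * δb - εp * δr) = 0 := by ring_nf; nlinarith [h]
    have hpow : εp ^ d ≤ εp := by
      calc εp ^ d ≤ εp ^ 1 := pow_le_pow_of_le_one hεp0.le hεp1.le hd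
      _ = εp := pow_one εp
    have hE0 : ε * ((1 - εp) * δb - εp * δr) = 0 := by linarith
    have hpe : εp ^ d = εp := by linarith
    refine ⟨?_, hE0⟩
    by_contra hne
    have h2 : 2 ≤ d := by omega
    have : εp ^ d < εp ^ 1 := pow_lt_pow_right_of_lt_one₀ hεp0 hεp1 (by omega)
    simp [pow_one, hpe] at this
  · rintro ⟨rfl, hE0⟩
    simp only [pow_one]
    nlinarith [hE0]
end
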